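/- Let I be a finite index set and for each i ∈ I let Lᵢ be a prefix-closed language over a finite alphabet Σᵢ with observable subset Σᵢ,ₒ ⊆ Σᵢ, faulty sublanguage Lᵢ,f ⊆ Lᵢ and non-faulty sublanguage Lᵢ,nf := Lᵢ ∖ Lᵢ,f; let L := ∥_{i∈I} Lᵢ be the global language and, for a string s over Σᵢ, let Pᵢ⁻¹(s) := { w ∈ L : Pᵢ(w) = s } (extended to sets of strings elementwise). Let Mᵢ denote the natural projection onto Σᵢ,ₒ (applied both to strings over Σᵢ and to global strings over ⋃_{i∈I} Σᵢ). If the system is locally diagnosable — i.e., there exists n ∈ ℕ such that for every i ∈ I, every s ∈ Lᵢ,f and every t with s·t ∈ Lᵢ,f and |t| ≥ n one has Mᵢ(s·t) ∉ Mᵢ(Lᵢ,nf) — then the system is modularly diagnosable: there exists n ∈ ℕ such that for every i ∈ I, every s ∈ Lᵢ,f and every t with s·t ∈ Lᵢ,f and |t| ≥ n, the sets Mᵢ(Pᵢ⁻¹(s·t)) and Mᵢ(Pᵢ⁻¹(Lᵢ,nf)) are disjoint. -/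
import Mathlib


/-- Natural projection: erase all events not in `S`. -/
def proj {α : Type*} [DecidableEq α] (S : Finset α) (s : List α) : List α :=
  s.filter (· ∈ S)

/-- A language is prefix-closed. -/
def PrefixClosed {α : Type*} (L : Set (List α)) : Prop :=
  ∀ s ∈ L, ∀ t, t <+: s → t ∈ L

/-- A language over the alphabet `S`. -/
def LangOver {α : Type*} (S : Finset α) (L : Set (List α)) : Prop :=
  ∀ s ∈ L, ∀ x ∈ s, x ∈ S

/-- Parallel composition of a finite family of languages `Lloc i ⊆ (E i)*`:
the strings over `⋃ i, E i` whose projection onto each `E i` lies in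
`Lloc i`. -/
def parFam {α ι : Type*} [DecidableEq α] (E : ι → Finset α)
    (Lloc : ι → Set (List α)) : Set (List α) :=
  {s | (∀ x ∈ s, ∃ i, x ∈ E i) ∧ ∀ i, proj (E i) s ∈ Lloc i}

lemma proj_proj {α : Type*} [DecidableEq α] {O E : Finset α} (h : O ⊆ E)
    (w : List α) : proj O (proj E w) = proj O w := by
  simp only [proj, List.filter_filter]
  apply List.filter_congr
  intro x _
  by_cases hx : x ∈ O
  · simp [hx, h hx]
  · simp [hx]

/-- Local diagnosability implies modular diagnosability (Contant et al.,
Theorem 2, Part 2): if there is `n` such that for every module `i`, every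
faulty `s ∈ Lᵢ,f` and every continuation `t` with `s·t ∈ Lᵢ,f`, `|t| ≥ n`,
the local observation `Mᵢ(s·t)` is not an observation of `Lᵢ,nf`, then there
is `n` such that the sets `Mᵢ(Pᵢ⁻¹(s·t))` and `Mᵢ(Pᵢ⁻¹(Lᵢ,nf))` are
disjoint. -/
theorem stmt3 {α ι : Type*} [DecidableEq α] [Fintype ι]
    (E O : ι → Finset α) (hO : ∀ i, O i ⊆ E i)
    (Lloc : ι → Set (List α))
    (hLloc : ∀ i, LangOver (E i) (Lloc i))
    (hpc : ∀ i, PrefixClosed (Lloc i))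
    (Lf : ι → Set (List α)) (hLf : ∀ i, Lf i ⊆ Lloc i)
    (hloc : ∃ n : ℕ, ∀ i, ∀ s ∈ Lf i, ∀ t : List α,
      s ++ t ∈ Lf i → n ≤ t.length →
        proj (O i) (s ++ t) ∉ proj (O i) '' (Lloc i \ Lf i)) :
    ∃ n : ℕ, ∀ i, ∀ s ∈ Lf i, ∀ t : List α,
      s ++ t ∈ Lf i → n ≤ t.length →
        Disjoint
          (proj (O i) '' {w ∈ parFam E Lloc | proj (E i) w = s ++ t})
          (proj (O i) '' {w ∈ parFam E Lloc | proj (E i) w ∈ Lloc i \ Lf i}) := by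
  obtain ⟨n, hn⟩ := hloc
  refine ⟨n, fun i s hs t hst hlen => ?_⟩
  rw [Set.disjoint_left]
  rintro x ⟨w, ⟨hw, hwp⟩, rfl⟩ ⟨w', ⟨hw', hw'p⟩, heq⟩
  apply hn i s hs t hst hlen
  refine ⟨proj (E i) w', hw'p, ?_⟩
  rw [← hwp, proj_proj (hO i), proj_proj (hO i), heq]
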